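/- Let A be a hypersolvable central arrangement in ℂ^l admitting a composition series of length ℓ. Then A is supersolvable if and only if ℓ = r(A). -/

import Mathlib

/-! Common notions for central hyperplane arrangements, given by a family
`f : ι → Module.Dual ℂ V` of defining linear functionals (one per hyperplane). -/

variable {V : Type*} [AddCommGroup V] [Module ℂ V]

/-- The intersection lattice of the subarrangement indexed by the finite set `B`:
all intersections of subfamilies of kernels (the empty intersection being `⊤ = V`). -/
def arrLatticeOn {ι : Type*} (f : ι → Module.Dual ℂ V) (B : Finset ι) :
    Set (Submodule ℂ V) :=
  {X | ∃ S : Finset ι, S ⊆ B ∧ X = S.inf fun i => LinearMap.ker (f i)}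

/-- The rank (codimension) of an element of the intersection lattice. -/
noncomputable def arrCorank (X : Submodule ℂ V) : ℕ :=
  Module.finrank ℂ (V ⧸ X)

/-- The rank of the subarrangement indexed by `B`: the maximal rank occurring in its
intersection lattice. -/
noncomputable def arrRankOn {ι : Type*} (f : ι → Module.Dual ℂ V) (B : Finset ι) : ℕ :=
  sSup (arrCorank '' arrLatticeOn f B)

/-- The intersection lattice of the whole arrangement. -/
def arrLattice {ι : Type*} [Fintype ι] (f : ι → Module.Dual ℂ V) :
    Set (Submodule ℂ V) :=
  arrLatticeOn f Finset.univ

/-- The rank `r(A)` of the arrangement. -/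
noncomputable def arrRank {ι : Type*} [Fintype ι] (f : ι → Module.Dual ℂ V) : ℕ :=
  arrRankOn f Finset.univ

/-- `X` is a modular element of the intersection lattice. -/
def IsModular {ι : Type*} [Fintype ι] (f : ι → Module.Dual ℂ V) (X : Submodule ℂ V) : Prop :=
  X ∈ arrLattice f ∧ ∀ Y ∈ arrLattice f, X ⊔ Y ∈ arrLattice f

/-- A central arrangement is supersolvable if there is a maximal chain
`V = X_0 ⊃ X_1 ⊃ ⋯ ⊃ X_r = center` of modular elements, with `X_i` of rank `i`
and `r = r(A)`. -/
def Supersolvable {ι : Type*} [Fintype ι] (f : ι → Module.Dual ℂ V) : Prop :=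
  ∃ X : ℕ → Submodule ℂ V,
    X 0 = ⊤ ∧
    X (arrRank f) = ⨅ i, LinearMap.ker (f i) ∧
    (∀ i ≤ arrRank f, IsModular f (X i)) ∧
    (∀ i ≤ arrRank f, arrCorank (X i) = i) ∧
    (∀ i j, i ≤ j → j ≤ arrRank f → X j ≤ X i)

/-- The pair of subarrangements `B ⊊ C` is a solvable extension: closure, completion
and solvability conditions on the defining functionals. -/
def IsSolvableExtension {ι : Type*} [DecidableEq ι] (f : ι → Module.Dual ℂ V) (B C : Finset ι) : Prop :=
  B ⊂ C ∧
  -- closure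
  (∀ α ∈ B, ∀ β ∈ B, α ≠ β → ∀ a ∈ C \ B, LinearIndependent ℂ ![f α, f β, f a]) ∧
  -- completion
  (∀ a ∈ C \ B, ∀ b ∈ C \ B, a ≠ b →
    ∃ α ∈ B, f α ∈ Submodule.span ℂ {f a, f b}) ∧
  -- solvability
  (∀ a ∈ C \ B, ∀ b ∈ C \ B, ∀ c ∈ C \ B, a ≠ b → b ≠ c → a ≠ c →
    ∀ α ∈ B, ∀ β ∈ B, ∀ γ ∈ B,
      f α ∈ Submodule.span ℂ {f a, f b} →
      f β ∈ Submodule.span ℂ {f b, f c} →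
      f γ ∈ Submodule.span ℂ {f a, f c} →
      ((α = β ∧ β = γ) ∨
        Module.finrank ℂ (Submodule.span ℂ ({f α, f β, f γ} : Set (Module.Dual ℂ V))) ≤ 2))

/-- `c 1 ⊂ c 2 ⊂ ⋯ ⊂ c ℓ` is a composition series of length `ℓ` for the arrangement:
it starts with a single hyperplane, ends with the full arrangement, and each step is a
solvable extension. -/
def IsCompSeries {ι : Type*} [DecidableEq ι] [Fintype ι] (f : ι → Module.Dual ℂ V) (ℓ : ℕ)
    (c : ℕ → Finset ι) : Prop :=
  1 ≤ ℓ ∧ (c 1).card = 1 ∧ c ℓ = Finset.univ ∧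
  ∀ i, 1 ≤ i → i < ℓ → IsSolvableExtension f (c i) (c (i + 1))

/-- A central arrangement is hypersolvable if it admits a composition series. -/
def Hypersolvable {ι : Type*} [DecidableEq ι] [Fintype ι] (f : ι → Module.Dual ℂ V) : Prop :=
  ∃ (ℓ : ℕ) (c : ℕ → Finset ι), IsCompSeries f ℓ c

/-- The complement of the central arrangement in `ℂ^l` defined by the functionals `f`. -/
def arrComplement {l : ℕ} {ι : Type*} (f : ι → Module.Dual ℂ (Fin l → ℂ)) :
    Set (Fin l → ℂ) :=
  {x | ∀ i, f i x ≠ 0}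

section Helpers

open Submodule Finset Module

variable {W : Type*} [AddCommGroup W] [Module ℂ W]

lemma jp_indep3_coeffs {u v w : W} (h : LinearIndependent ℂ ![u, v, w])
    {x y z : ℂ} (hs : x • u + y • v + z • w = 0) : x = 0 ∧ y = 0 ∧ z = 0 := by
  have h2 := Fintype.linearIndependent_iff.mp h ![x, y, z]
  have h3 : ∑ i, ![x, y, z] i • ![u, v, w] i = 0 := by
    simpa [Fin.sum_univ_three] using hs
  have h4 := h2 h3
  exact ⟨h4 0, h4 1, h4 2⟩

lemma jp_not_indep_of_mem_span {u v w : W}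
    (hw : w ∈ Submodule.span ℂ ({u, v} : Set W)) : ¬ LinearIndependent ℂ ![u, v, w] := by
  intro h
  obtain ⟨x, y, hxy⟩ := Submodule.mem_span_pair.mp hw
  have hz : x • u + y • v + (-1 : ℂ) • w = 0 := by
    rw [neg_one_smul, ← hxy]; abel
  have := jp_indep3_coeffs h hz
  simpa using this.2.2

lemma jp_pair_indep {u v : W} (hv : v ≠ 0) (hne : ∀ a : ℂ, u ≠ a • v) :
    LinearIndependent ℂ ![u, v] := by
  rw [LinearIndependent.pair_iff]
  intro s t hst
  by_cases hs : s = 0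
  · subst hs
    simp only [zero_smul, zero_add] at hst
    rcases smul_eq_zero.mp hst with h | h
    · exact ⟨rfl, h⟩
    · exact absurd h hv
  · exfalso
    apply hne (-t / s)
    have h1 : s • u = -t • v := by
      rw [neg_smul, eq_neg_iff_add_eq_zero]; exact hst
    calc u = s⁻¹ • (s • u) := (inv_smul_smul₀ hs u).symm
    _ = s⁻¹ • (-t • v) := by rw [h1]
    _ = (-t / s) • v := by rw [smul_smul, div_eq_inv_mul]

lemma jp_indep3_of_pair_not_mem {u v w : W} (huv : LinearIndependent ℂ ![u, v])
    (hw : w ∉ Submodule.span ℂ ({u, v} : Set W)) : LinearIndependent ℂ ![u, v, w] := by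
  rw [Fintype.linearIndependent_iff]
  intro g hg
  have hg' : g 0 • u + g 1 • v + g 2 • w = 0 := by
    simpa [Fin.sum_univ_three] using hg
  by_cases h2 : g 2 = 0
  · rw [h2, zero_smul, add_zero] at hg'
    have := (LinearIndependent.pair_iff.mp huv) (g 0) (g 1) hg'
    intro i
    fin_cases i
    · exact this.1
    · exact this.2
    · exact h2
  · exfalso
    apply hw
    have h1 : g 2 • w = -(g 0) • u + -(g 1) • v := by
      rw [neg_smul, neg_smul, ← neg_add, eq_neg_iff_add_eq_zero, add_comm]
      exact hg'
    have h3 : w = ((g 2)⁻¹ * -(g 0)) • u + ((g 2)⁻¹ * -(g 1)) • v := by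
      calc w = (g 2)⁻¹ • (g 2 • w) := (inv_smul_smul₀ h2 w).symm
      _ = (g 2)⁻¹ • (-(g 0) • u + -(g 1) • v) := by rw [h1]
      _ = _ := by rw [smul_add, smul_smul, smul_smul]
    exact Submodule.mem_span_pair.mpr ⟨_, _, h3.symm⟩

end Helpers

section Helpers2
open Submodule
variable {W : Type*} [AddCommGroup W] [Module ℂ W]

lemma jp_not_indep_mid {u v w : W}
    (hv : v ∈ Submodule.span ℂ ({u, w} : Set W)) : ¬ LinearIndependent ℂ ![u, v, w] := by
  intro h
  obtain ⟨x, y, hxy⟩ := Submodule.mem_span_pair.mp hv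
  have hz : x • u + (-1 : ℂ) • v + y • w = 0 := by
    rw [neg_one_smul, ← hxy]; abel
  have := jp_indep3_coeffs h hz
  simpa using this.2.1

end Helpers2

section Series

open Finset

variable {n : ℕ}

def SeriesOn (f : Fin n → Module.Dual ℂ V) (E : Finset (Fin n)) (ℓ : ℕ)
    (c : ℕ → Finset (Fin n)) : Prop :=
  1 ≤ ℓ ∧ (c 1).card = 1 ∧ c ℓ = E ∧
    ∀ i, 1 ≤ i → i < ℓ → IsSolvableExtension f (c i) (c (i + 1))

variable {f : Fin n → Module.Dual ℂ V} {E B B' C : Finset (Fin n)} {ℓ ℓ' : ℕ}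
  {c c' : ℕ → Finset (Fin n)}

lemma jp_chain (hs : SeriesOn f E ℓ c) {i j : ℕ} (hi : 1 ≤ i) (hij : i ≤ j) (hj : j ≤ ℓ) :
    c i ⊆ c j := by
  induction j, hij using Nat.le_induction with
  | base => exact subset_rfl
  | succ m hm ih =>
    refine (ih (le_trans (Nat.le_succ m) hj)).trans ?_
    exact (hs.2.2.2 m (le_trans hi hm) (Nat.lt_of_succ_le hj)).1.subset

lemma jp_ser_sub (hs : SeriesOn f E ℓ c) {i : ℕ} (hi : 1 ≤ i) (hij : i ≤ ℓ) : c i ⊆ E :=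
  hs.2.2.1 ▸ jp_chain hs hi hij le_rfl

lemma jp_ser_nonempty (hs : SeriesOn f E ℓ c) : E.Nonempty := by
  have h1 : (c 1).Nonempty := card_pos.mp (by rw [hs.2.1]; norm_num)
  exact h1.mono (jp_ser_sub hs le_rfl hs.1)

lemma jp_last_step (hs : SeriesOn f E ℓ c) (h2 : 2 ≤ ℓ) :
    IsSolvableExtension f (c (ℓ - 1)) E := by
  have := hs.2.2.2 (ℓ - 1) (by omega) (by omega)
  rwa [Nat.sub_add_cancel (by omega : 1 ≤ ℓ), hs.2.2.1] at this

lemma jp_ser_card_one (hs : SeriesOn f E ℓ c) (hE : E.card ≤ 1) : ℓ = 1 := by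
  by_contra h
  have h2 : 2 ≤ ℓ := by rcases hs.1.lt_or_eq with h' | h' <;> omega
  have hstep := jp_last_step hs h2
  have hsub : c 1 ⊆ c (ℓ - 1) := jp_chain hs le_rfl (by omega) (by omega)
  have hcard : (c 1).card ≤ (c (ℓ - 1)).card := card_le_card hsub
  have hc1 := hs.2.1
  have : (c (ℓ - 1)).card < E.card := card_lt_card hstep.1
  omega

lemma jp_trunc (hs : SeriesOn f E ℓ c) (h2 : 2 ≤ ℓ) : SeriesOn f (c (ℓ - 1)) (ℓ - 1) c :=
  ⟨by omega, hs.2.1, rfl, fun i hi hil => hs.2.2.2 i hi (by omega)⟩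

lemma jp_extend {m : ℕ} (hs : SeriesOn f B m c) (hx : IsSolvableExtension f B C) :
    SeriesOn f C (m + 1) (fun i => if i ≤ m then c i else C) := by
  obtain ⟨hm, hc1, hcm, hstep⟩ := hs
  refine ⟨by omega, ?_, ?_, ?_⟩
  · simp only [if_pos hm]; exact hc1
  · simp only [Nat.lt_irrefl, if_neg (by omega : ¬ m + 1 ≤ m)]
  · intro i hi hil
    by_cases him : i + 1 ≤ m
    · simpa only [if_pos (by omega : i ≤ m), if_pos him] using hstep i hi (by omega)
    · have : i = m := by omega
      subst this
      simpa only [if_pos le_rfl, if_neg him, hcm] using hx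

lemma jp_restrict (h : IsSolvableExtension f B E) (hBC : B ⊆ C) (hCE : C ⊆ E) (hne : B ≠ C) :
    IsSolvableExtension f B C := by
  obtain ⟨hsub, hclo, hcomp, hsolv⟩ := h
  have hmem : ∀ a ∈ C \ B, a ∈ E \ B := fun a ha => by
    rw [mem_sdiff] at ha ⊢; exact ⟨hCE ha.1, ha.2⟩
  exact ⟨Finset.ssubset_iff_subset_ne.mpr ⟨hBC, hne⟩,
    fun α hα β hβ hab a ha => hclo α hα β hβ hab a (hmem a ha),
    fun a ha b hb hab => hcomp a (hmem a ha) b (hmem b hb) hab,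
    fun a ha b hb cc hcc h1 h2 h3 => hsolv a (hmem a ha) b (hmem b hb) cc (hmem cc hcc) h1 h2 h3⟩

lemma jp_nested (h : IsSolvableExtension f B E) (h' : IsSolvableExtension f B' E) (hBB : B ⊂ B') :
    False := by
  obtain ⟨a, haB', haB⟩ := Finset.exists_of_ssubset hBB
  obtain ⟨b, hbE, hbB'⟩ := Finset.exists_of_ssubset h'.1
  have hbB : b ∉ B := fun hb => hbB' (hBB.subset hb)
  have hab : a ≠ b := fun hab => hbB' (hab ▸ haB')
  obtain ⟨w, hwB, hw⟩ := h.2.2.1 a (mem_sdiff.mpr ⟨h'.1.subset haB', haB⟩)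
    b (mem_sdiff.mpr ⟨hbE, hbB⟩) hab
  have haw : a ≠ w := fun h => haB (h ▸ hwB)
  have hind := h'.2.1 a haB' w (hBB.subset hwB) haw b (mem_sdiff.mpr ⟨hbE, hbB'⟩)
  exact jp_not_indep_mid hw hind

lemma jp_disjoint_card (h : IsSolvableExtension f B E) (h' : IsSolvableExtension f B' E)
    (hdis : B ∩ B' = ∅) : B.card ≤ 1 := by
  by_contra hcard
  have hc2 : 1 < B.card := by omega
  obtain ⟨a, ha, b, hb, hab⟩ := Finset.one_lt_card.mp hc2
  have hmem : ∀ x ∈ B, x ∈ E \ B' := fun x hx => mem_sdiff.mpr ⟨h.1.subset hx,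
    fun hx' => by have : x ∈ B ∩ B' := mem_inter.mpr ⟨hx, hx'⟩; simp [hdis] at this⟩
  obtain ⟨w, hwB', hw⟩ := h'.2.2.1 a (hmem a ha) b (hmem b hb) hab
  have hwB : w ∉ B := fun hwb => by
    have : w ∈ B ∩ B' := mem_inter.mpr ⟨hwb, hwB'⟩; simp [hdis] at this
  have hind := h.2.1 a ha b hb hab w (mem_sdiff.mpr ⟨h'.1.subset hwB', hwB⟩)
  exact jp_not_indep_of_mem_span hw hind

lemma jp_exchange (h : IsSolvableExtension f B E) (h' : IsSolvableExtension f B' E)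
    (hne : (B \ B').Nonempty) : IsSolvableExtension f (B ∩ B') B := by
  have hdiff : B \ (B ∩ B') = B \ B' := Finset.sdiff_inter_self_left B B'
  have hmem : ∀ x ∈ B \ (B ∩ B'), x ∈ E \ B' := fun x hx => by
    rw [hdiff, mem_sdiff] at hx
    exact mem_sdiff.mpr ⟨h.1.subset hx.1, hx.2⟩
  refine ⟨?_, ?_, ?_, ?_⟩
  · refine Finset.ssubset_iff_of_subset (inter_subset_left) |>.mpr ?_
    obtain ⟨x, hx⟩ := hne
    rw [← hdiff] at hx
    exact ⟨x, (mem_sdiff.mp hx).1, (mem_sdiff.mp hx).2⟩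
  · intro α hα β hβ hab a ha
    exact h'.2.1 α (mem_inter.mp hα).2 β (mem_inter.mp hβ).2 hab a (hmem a ha)
  · intro a ha b hb hab
    obtain ⟨w, hwB', hw⟩ := h'.2.2.1 a (hmem a ha) b (hmem b hb) hab
    refine ⟨w, mem_inter.mpr ⟨?_, hwB'⟩, hw⟩
    by_contra hwB
    have hind := h.2.1 a (mem_sdiff.mp ((hdiff ▸ ha : a ∈ B \ B'))).1
      b (mem_sdiff.mp ((hdiff ▸ hb : b ∈ B \ B'))).1 hab
      w (mem_sdiff.mpr ⟨h'.1.subset hwB', hwB⟩)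
    exact jp_not_indep_of_mem_span hw hind
  · intro a ha b hb cc hcc h1 h2 h3 α hα β hβ γ hγ m1 m2 m3
    exact h'.2.2.2 a (hmem a ha) b (hmem b hb) cc (hmem cc hcc) h1 h2 h3
      α (mem_inter.mp hα).2 β (mem_inter.mp hβ).2 γ (mem_inter.mp hγ).2 m1 m2 m3

end Series

section Invariance

open Finset

variable {n : ℕ} {f : Fin n → Module.Dual ℂ V}

theorem jp_main : ∀ (m : ℕ) (E : Finset (Fin n)), E.card ≤ m →
    (∀ {ℓ : ℕ} {c : ℕ → Finset (Fin n)} {ℓ' : ℕ} {c' : ℕ → Finset (Fin n)},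
      SeriesOn f E ℓ c → SeriesOn f E ℓ' c' → ℓ = ℓ') ∧
    (∀ {ℓ : ℕ} {c : ℕ → Finset (Fin n)} (B : Finset (Fin n)),
      SeriesOn f E ℓ c → IsSolvableExtension f B E → B.Nonempty →
      ∃ c'' : ℕ → Finset (Fin n), SeriesOn f B (ℓ - 1) c'') := by
  intro m
  induction m with
  | zero =>
    intro E hE
    have hemp : ¬ E.Nonempty := by
      rw [Finset.nonempty_iff_ne_empty]
      intro h; apply h; exact Finset.card_eq_zero.mp (by omega)
    exact ⟨fun hs _ => absurd (jp_ser_nonempty hs) hemp,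
      fun _ hs _ _ => absurd (jp_ser_nonempty hs) hemp⟩
  | succ m IH =>
    intro E hE
    have uniq : ∀ {ℓ : ℕ} {c : ℕ → Finset (Fin n)} {ℓ' : ℕ} {c' : ℕ → Finset (Fin n)},
        SeriesOn f E ℓ c → SeriesOn f E ℓ' c' → ℓ = ℓ' := by
      intro ℓ c ℓ' c' hs hs'
      by_cases hl1 : ℓ = 1
      · have hE1 : E.card ≤ 1 := by
          have h9 := hs.2.1
          rw [← hs.2.2.1, hl1]; omega
        rw [hl1, jp_ser_card_one hs' hE1]
      by_cases hl1' : ℓ' = 1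
      · have hE1 : E.card ≤ 1 := by
          have h9 := hs'.2.1
          rw [← hs'.2.2.1, hl1']; omega
        rw [hl1', jp_ser_card_one hs hE1]
      have h2 : 2 ≤ ℓ := by have := hs.1; omega
      have h2' : 2 ≤ ℓ' := by have := hs'.1; omega
      have hx : IsSolvableExtension f (c (ℓ - 1)) E := jp_last_step hs h2
      have hx' : IsSolvableExtension f (c' (ℓ' - 1)) E := jp_last_step hs' h2'
      have ht : SeriesOn f (c (ℓ - 1)) (ℓ - 1) c := jp_trunc hs h2
      have ht' : SeriesOn f (c' (ℓ' - 1)) (ℓ' - 1) c' := jp_trunc hs' h2'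
      have hcard1 : (c (ℓ - 1)).card ≤ m :=
        Nat.lt_succ_iff.mp (lt_of_lt_of_le (card_lt_card hx.1) hE)
      have hcard1' : (c' (ℓ' - 1)).card ≤ m :=
        Nat.lt_succ_iff.mp (lt_of_lt_of_le (card_lt_card hx'.1) hE)
      by_cases heq : c (ℓ - 1) = c' (ℓ' - 1)
      · have := (IH _ hcard1).1 ht (heq ▸ ht')
        omega
      by_cases hss : c (ℓ - 1) ⊂ c' (ℓ' - 1)
      · exact absurd (jp_nested hx hx' hss) (fun h => h)
      by_cases hss' : c' (ℓ' - 1) ⊂ c (ℓ - 1)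
      · exact absurd (jp_nested hx' hx hss') (fun h => h)
      have hd : (c (ℓ - 1) \ c' (ℓ' - 1)).Nonempty := by
        rw [Finset.sdiff_nonempty]
        intro hsub
        exact hss (Finset.ssubset_iff_subset_ne.mpr ⟨hsub, heq⟩)
      have hd' : (c' (ℓ' - 1) \ c (ℓ - 1)).Nonempty := by
        rw [Finset.sdiff_nonempty]
        intro hsub
        exact hss' (Finset.ssubset_iff_subset_ne.mpr ⟨hsub, fun h => heq h.symm⟩)
      by_cases hB0 : (c (ℓ - 1) ∩ c' (ℓ' - 1)).Nonempty
      · have e1 : IsSolvableExtension f (c (ℓ - 1) ∩ c' (ℓ' - 1)) (c (ℓ - 1)) :=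
          jp_exchange hx hx' hd
        have e2 : IsSolvableExtension f (c (ℓ - 1) ∩ c' (ℓ' - 1)) (c' (ℓ' - 1)) := by
          rw [inter_comm]
          exact jp_exchange hx' hx hd'
        obtain ⟨c0, hc0⟩ := (IH _ hcard1).2 _ ht e1 hB0
        obtain ⟨c0', hc0'⟩ := (IH _ hcard1').2 _ ht' e2 hB0
        have hcard0 : (c (ℓ - 1) ∩ c' (ℓ' - 1)).card ≤ m :=
          le_trans (card_le_card inter_subset_left) hcard1
        have hu := (IH _ hcard0).1 hc0 hc0'
        have g1 := hc0.1
        have g2 := hc0'.1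
        omega
      · rw [Finset.not_nonempty_iff_eq_empty] at hB0
        have hc1 : (c (ℓ - 1)).card ≤ 1 := jp_disjoint_card hx hx' hB0
        have hc1' : (c' (ℓ' - 1)).card ≤ 1 := jp_disjoint_card hx' hx (by rw [inter_comm]; exact hB0)
        have := jp_ser_card_one ht hc1
        have := jp_ser_card_one ht' hc1'
        omega
    refine ⟨uniq, ?_⟩
    intro ℓ c B hs hx hBne
    have h2 : 2 ≤ ℓ := by
      by_contra h
      have hl1 : ℓ = 1 := by have := hs.1; omega
      have hE1 : E.card = 1 := by rw [← hs.2.2.1, hl1]; exact hs.2.1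
      have : B.card < E.card := card_lt_card hx.1
      have : 1 ≤ B.card := Finset.card_pos.mpr hBne
      omega
    have hx1 : IsSolvableExtension f (c (ℓ - 1)) E := jp_last_step hs h2
    have ht : SeriesOn f (c (ℓ - 1)) (ℓ - 1) c := jp_trunc hs h2
    have hcard1 : (c (ℓ - 1)).card ≤ m :=
      Nat.lt_succ_iff.mp (lt_of_lt_of_le (card_lt_card hx1.1) hE)
    by_cases heq : B = c (ℓ - 1)
    · exact ⟨c, heq ▸ ht⟩
    by_cases hss : B ⊂ c (ℓ - 1)
    · exact absurd (jp_nested hx hx1 hss) (fun h => h)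
    by_cases hss' : c (ℓ - 1) ⊂ B
    · exact absurd (jp_nested hx1 hx hss') (fun h => h)
    have hd : (B \ c (ℓ - 1)).Nonempty := by
      rw [Finset.sdiff_nonempty]
      intro hsub
      exact hss (Finset.ssubset_iff_subset_ne.mpr ⟨hsub, heq⟩)
    have hd' : (c (ℓ - 1) \ B).Nonempty := by
      rw [Finset.sdiff_nonempty]
      intro hsub
      exact hss' (Finset.ssubset_iff_subset_ne.mpr ⟨hsub, fun h => heq h.symm⟩)
    by_cases hB0 : (B ∩ c (ℓ - 1)).Nonempty
    · have e2 : IsSolvableExtension f (B ∩ c (ℓ - 1)) (c (ℓ - 1)) := by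
        rw [inter_comm]
        exact jp_exchange hx1 hx hd'
      have e3 : IsSolvableExtension f (B ∩ c (ℓ - 1)) B := jp_exchange hx hx1 hd
      obtain ⟨c0, hc0⟩ := (IH _ hcard1).2 _ ht e2 hB0
      have hext := jp_extend hc0 e3
      have harith : ℓ - 1 - 1 + 1 = ℓ - 1 := by have := hc0.1; omega
      rw [harith] at hext
      exact ⟨_, hext⟩
    · rw [Finset.not_nonempty_iff_eq_empty] at hB0
      have hcB : B.card ≤ 1 := jp_disjoint_card hx hx1 hB0
      have hcB1 : B.card = 1 := by
        have := Finset.card_pos.mpr hBne; omega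
      have htriv : SeriesOn f B 1 (fun _ => B) := ⟨le_rfl, hcB1, rfl, fun i hi hil => by omega⟩
      have hE2 : SeriesOn f E 2 _ := jp_extend htriv hx
      have : ℓ = 2 := uniq hs hE2
      rw [this]
      exact ⟨_, htriv⟩

end Invariance

section Dictionary

open Submodule Finset Module

variable {n : ℕ}

/-- The intersection of kernels over `S`. -/
abbrev jpK (f : Fin n → Module.Dual ℂ V) (S : Finset (Fin n)) : Submodule ℂ V :=
  S.inf fun i => LinearMap.ker (f i)

/-- The span of the functionals over `S`. -/
abbrev jpSp (f : Fin n → Module.Dual ℂ V) (S : Finset (Fin n)) :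
    Submodule ℂ (Module.Dual ℂ V) :=
  Submodule.span ℂ (f '' S)

variable {f : Fin n → Module.Dual ℂ V}

lemma jp_mem_K {S : Finset (Fin n)} {v : V} : v ∈ jpK f S ↔ ∀ i ∈ S, f i v = 0 := by
  show v ∈ S.inf (fun i => LinearMap.ker (f i)) ↔ _
  rw [Finset.inf_eq_iInf]
  simp [Submodule.mem_iInf, LinearMap.mem_ker]

lemma jp_mem_Sp {S : Finset (Fin n)} {i : Fin n} (hi : i ∈ S) : f i ∈ jpSp f S :=
  Submodule.subset_span ⟨i, hi, rfl⟩

lemma jp_Sp_mono {S T : Finset (Fin n)} (h : S ⊆ T) : jpSp f S ≤ jpSp f T :=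
  Submodule.span_mono (Set.image_mono h)

lemma jp_Sp_le {S : Finset (Fin n)} {U : Submodule ℂ (Module.Dual ℂ V)}
    (h : ∀ i ∈ S, f i ∈ U) : jpSp f S ≤ U := by
  rw [Submodule.span_le]
  rintro x ⟨i, hi, rfl⟩
  exact h i hi

lemma jp_K_eq_coann (S : Finset (Fin n)) : jpK f S = (jpSp f S).dualCoannihilator := by
  ext v
  rw [jp_mem_K]
  have := Submodule.coe_dualCoannihilator_span (R := ℂ) (M := V) (f '' S)
  have hv : v ∈ ((span ℂ (f '' S)).dualCoannihilator : Set V) ↔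
      v ∈ {x : V | ∀ g ∈ f '' S, g x = 0} := by rw [this]
  rw [SetLike.mem_coe] at hv
  rw [hv]
  simp only [Set.mem_setOf_eq, Set.forall_mem_image]
  rfl

variable [FiniteDimensional ℂ V]

lemma jp_corank_K (S : Finset (Fin n)) : arrCorank (jpK f S) = finrank ℂ (jpSp f S) := by
  have h1 : finrank ℂ (V ⧸ jpK f S) + finrank ℂ (jpK f S) = finrank ℂ V :=
    Submodule.finrank_quotient_add_finrank _
  have h2 : finrank ℂ (jpSp f S) + finrank ℂ (jpSp f S).dualCoannihilator = finrank ℂ V :=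
    Subspace.finrank_add_finrank_dualCoannihilator_eq _
  rw [jp_K_eq_coann] at h1
  unfold arrCorank
  rw [jp_K_eq_coann]
  omega

lemma jp_coann_ann (U : Submodule ℂ (Module.Dual ℂ V)) :
    U.dualCoannihilator.dualAnnihilator = U := by
  have h1 : U ≤ U.dualCoannihilator.dualAnnihilator :=
    Submodule.le_dualCoannihilator_dualAnnihilator U
  have h2 : finrank ℂ U + finrank ℂ U.dualCoannihilator = finrank ℂ V :=
    Subspace.finrank_add_finrank_dualCoannihilator_eq _
  have h3 : finrank ℂ U.dualCoannihilator.dualAnnihilator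
      + finrank ℂ U.dualCoannihilator.dualAnnihilator.dualCoannihilator = finrank ℂ V :=
    Subspace.finrank_add_finrank_dualCoannihilator_eq _
  rw [Submodule.dualCoannihilator_dualAnnihilator_dualCoannihilator] at h3
  exact (Submodule.eq_of_le_of_finrank_le h1 (by omega)).symm

lemma jp_coann_inf (U1 U2 : Submodule ℂ (Module.Dual ℂ V)) :
    (U1 ⊓ U2).dualCoannihilator = U1.dualCoannihilator ⊔ U2.dualCoannihilator := by
  calc (U1 ⊓ U2).dualCoannihilator
      = ((U1.dualCoannihilator ⊔ U2.dualCoannihilator).dualAnnihilator).dualCoannihilator := by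
        rw [Submodule.dualAnnihilator_sup_eq, jp_coann_ann, jp_coann_ann]
  _ = U1.dualCoannihilator ⊔ U2.dualCoannihilator :=
        Subspace.dualAnnihilator_dualCoannihilator_eq

lemma jp_K_sup_K (S T : Finset (Fin n)) :
    jpK f S ⊔ jpK f T = (jpSp f S ⊓ jpSp f T).dualCoannihilator := by
  rw [jp_K_eq_coann, jp_K_eq_coann, jp_coann_inf]

lemma jp_K_inj {S T : Finset (Fin n)} (h : jpK f S = jpK f T) : jpSp f S = jpSp f T := by
  have h' : (jpSp f S).dualCoannihilator = (jpSp f T).dualCoannihilator := by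
    rw [← jp_K_eq_coann, ← jp_K_eq_coann]; exact h
  have h2 := congrArg Submodule.dualAnnihilator h'
  rwa [jp_coann_ann, jp_coann_ann] at h2

lemma jp_rankOn (B : Finset (Fin n)) : arrRankOn f B = finrank ℂ (jpSp f B) := by
  unfold arrRankOn
  refine le_antisymm (csSup_le ⟨_, ⟨jpK f B, ⟨B, subset_rfl, rfl⟩, rfl⟩⟩ ?_)
    (le_csSup ⟨finrank ℂ (Module.Dual ℂ V), ?_⟩ ⟨jpK f B, ⟨B, subset_rfl, rfl⟩, jp_corank_K (f := f) B⟩)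
  · rintro r ⟨X, ⟨S, hS, rfl⟩, rfl⟩
    rw [jp_corank_K (f := f) S]
    exact Submodule.finrank_mono (jp_Sp_mono hS)
  · rintro r ⟨X, ⟨S, hS, rfl⟩, rfl⟩
    rw [jp_corank_K (f := f) S]
    exact Submodule.finrank_le _

lemma jp_rank_eq : arrRank f = finrank ℂ (jpSp f Finset.univ) := jp_rankOn _

end Dictionary

section RankSteps

open Submodule Finset Module

variable {n : ℕ} {f : Fin n → Module.Dual ℂ V}

lemma jp_y_ne (hprop : ∀ i j : Fin n, i ≠ j → ∀ a : ℂ, f i ≠ a • f j)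
    {a b w : Fin n} (hne : w ≠ a) {x y : ℂ} (h : f w = x • f a + y • f b) : y ≠ 0 := by
  intro hy
  exact hprop w a hne x (by rw [h, hy, zero_smul, add_zero])

lemma jp_b_eq {a b w : Fin n} {x y : ℂ} (hy : y ≠ 0) (h : f w = x • f a + y • f b) :
    f b = y⁻¹ • f w + (-(y⁻¹ * x)) • f a := by
  rw [h, smul_add, smul_smul, smul_smul, inv_mul_cancel₀ hy, one_smul, neg_smul]
  abel

/-- completion gives: span of C is contained in span of B plus one new functional. -/
lemma jp_span_step (hprop : ∀ i j : Fin n, i ≠ j → ∀ a : ℂ, f i ≠ a • f j)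
    {B C : Finset (Fin n)} (h : IsSolvableExtension f B C) {a : Fin n} (ha : a ∈ C \ B) :
    jpSp f C ≤ jpSp f B ⊔ (ℂ ∙ f a) := by
  apply jp_Sp_le
  intro b hb
  by_cases hbB : b ∈ B
  · exact Submodule.mem_sup_left (jp_mem_Sp hbB)
  by_cases hba : b = a
  · exact hba ▸ Submodule.mem_sup_right (Submodule.mem_span_singleton_self _)
  obtain ⟨w, hwB, hw⟩ := h.2.2.1 a ha b (Finset.mem_sdiff.mpr ⟨hb, hbB⟩)
    (fun hab => hba hab.symm)
  obtain ⟨x, y, hxy⟩ := Submodule.mem_span_pair.mp hw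
  have hwa : w ≠ a := fun hwa' => (Finset.mem_sdiff.mp ha).2 (hwa' ▸ hwB)
  have hy : y ≠ 0 := jp_y_ne hprop hwa hxy.symm
  rw [jp_b_eq hy hxy.symm]
  exact Submodule.add_mem _
    (Submodule.mem_sup_left (Submodule.smul_mem _ _ (jp_mem_Sp hwB)))
    (Submodule.mem_sup_right (Submodule.smul_mem _ _ (Submodule.mem_span_singleton_self _)))

variable [FiniteDimensional ℂ V]

lemma jp_finrank_single (v : Module.Dual ℂ V) : finrank ℂ ↥(ℂ ∙ v) ≤ 1 := by
  by_cases hv : v = 0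
  · rw [hv, Submodule.span_zero_singleton]
    simp
  · rw [finrank_span_singleton hv]

lemma jp_rank_step (hprop : ∀ i j : Fin n, i ≠ j → ∀ a : ℂ, f i ≠ a • f j)
    {B C : Finset (Fin n)} (h : IsSolvableExtension f B C) :
    finrank ℂ (jpSp f C) ≤ finrank ℂ (jpSp f B) + 1 := by
  obtain ⟨a, ha⟩ := Finset.exists_of_ssubset h.1
  have h1 := jp_span_step hprop h (Finset.mem_sdiff.mpr ⟨ha.1, ha.2⟩)
  calc finrank ℂ (jpSp f C) ≤ finrank ℂ ↥(jpSp f B ⊔ (ℂ ∙ f a)) := Submodule.finrank_mono h1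
  _ ≤ finrank ℂ (jpSp f B) + finrank ℂ ↥(ℂ ∙ f a) :=
      Submodule.finrank_add_le_finrank_add_finrank _ _
  _ ≤ finrank ℂ (jpSp f B) + 1 := by
      have := jp_finrank_single (f a)
      omega

lemma jp_Sp_singleton {t : Fin n} : jpSp f {t} = ℂ ∙ f t := by
  show Submodule.span ℂ (f '' ↑({t} : Finset (Fin n))) = _
  rw [Finset.coe_singleton, Set.image_singleton]

lemma jp_ser_rank_le {E : Finset (Fin n)} {ℓ : ℕ} {c : ℕ → Finset (Fin n)}
    (hprop : ∀ i j : Fin n, i ≠ j → ∀ a : ℂ, f i ≠ a • f j)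
    (hs : SeriesOn f E ℓ c) : ∀ j, 1 ≤ j → j ≤ ℓ → finrank ℂ (jpSp f (c j)) ≤ j := by
  intro j
  induction j with
  | zero => omega
  | succ j ih =>
    intro _ hj
    by_cases hj1 : j = 0
    · subst hj1
      obtain ⟨t, ht⟩ := Finset.card_eq_one.mp hs.2.1
      rw [ht, jp_Sp_singleton]
      exact jp_finrank_single _
    · have hstep := hs.2.2.2 j (by omega) (by omega)
      have := jp_rank_step hprop hstep
      have := ih (by omega) (by omega)
      omega

end RankSteps

section Backward

open Submodule Finset Module

variable {n : ℕ} {f : Fin n → Module.Dual ℂ V} [FiniteDimensional ℂ V]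

lemma jp_ser_rank_exact {ℓ : ℕ} {c : ℕ → Finset (Fin n)}
    (hprop : ∀ i j : Fin n, i ≠ j → ∀ a : ℂ, f i ≠ a • f j)
    (hs : SeriesOn f Finset.univ ℓ c)
    (hrank : ℓ ≤ finrank ℂ (jpSp f (c ℓ))) :
    ∀ j, 1 ≤ j → j ≤ ℓ → finrank ℂ (jpSp f (c j)) = j := by
  have hge : ∀ k, k ≤ ℓ - 1 → ℓ - k ≤ finrank ℂ (jpSp f (c (ℓ - k))) := by
    intro k
    induction k with
    | zero => intro _; simpa using hrank
    | succ k ih =>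
      intro hk
      have h1 := ih (by omega)
      have hstep := hs.2.2.2 (ℓ - (k + 1)) (by omega) (by omega)
      have h2 := jp_rank_step hprop hstep
      have he : ℓ - (k + 1) + 1 = ℓ - k := by omega
      rw [he] at h2
      omega
  intro j h1 h2
  have h3 := hge (ℓ - j) (by omega)
  have he : ℓ - (ℓ - j) = j := by omega
  rw [he] at h3
  have h4 := jp_ser_rank_le hprop hs j h1 h2
  omega

lemma jp_cross {c : ℕ → Finset (Fin n)} {t : Fin n} :
    ∀ d j, 1 ≤ j → t ∉ c j → t ∈ c (j + d) →
      ∃ k, j ≤ k ∧ k < j + d ∧ t ∉ c k ∧ t ∈ c (k + 1) := by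
  intro d
  induction d with
  | zero => intro j _ h1 h2; exact absurd h2 h1
  | succ d ih =>
    intro j hj h1 h2
    by_cases hd : t ∈ c (j + d)
    · obtain ⟨k, hk1, hk2, hk3, hk4⟩ := ih j hj h1 hd
      exact ⟨k, hk1, by omega, hk3, hk4⟩
    · exact ⟨j + d, by omega, by omega, hd, h2⟩

lemma jp_genericity {ℓ : ℕ} {c : ℕ → Finset (Fin n)}
    (hprop : ∀ i j : Fin n, i ≠ j → ∀ a : ℂ, f i ≠ a • f j)
    (hs : SeriesOn f Finset.univ ℓ c)
    (hex : ∀ j, 1 ≤ j → j ≤ ℓ → finrank ℂ (jpSp f (c j)) = j) :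
    ∀ j, 1 ≤ j → j ≤ ℓ → ∀ t : Fin n, f t ∈ jpSp f (c j) → t ∈ c j := by
  intro j hj hjl t hft
  by_contra htj
  have htl : t ∈ c ℓ := hs.2.2.1 ▸ Finset.mem_univ t
  obtain ⟨k, hk1, hk2, hk3, hk4⟩ := jp_cross (ℓ - j) j hj htj
    (by rw [(by omega : j + (ℓ - j) = ℓ)]; exact htl)
  have hkl : k < ℓ := by omega
  have hstep := hs.2.2.2 k (by omega) hkl
  have hmono : jpSp f (c j) ≤ jpSp f (c k) := jp_Sp_mono (jp_chain hs hj hk1 (by omega))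
  have hftk : f t ∈ jpSp f (c k) := hmono hft
  have hexb : ∃ b ∈ c (k + 1), f b ∉ jpSp f (c k) := by
    by_contra hall
    push_neg at hall
    have hle : jpSp f (c (k + 1)) ≤ jpSp f (c k) := jp_Sp_le hall
    have e1 := hex k (by omega) (by omega)
    have e2 := hex (k + 1) (by omega) (by omega)
    have := Submodule.finrank_mono hle
    omega
  obtain ⟨b, hb1, hb2⟩ := hexb
  have hbk : b ∉ c k := fun h => hb2 (jp_mem_Sp h)
  have hbt : t ≠ b := fun h => hb2 (h ▸ hftk)
  obtain ⟨w, hwB, hw⟩ := hstep.2.2.1 t (Finset.mem_sdiff.mpr ⟨hk4, hk3⟩)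
    b (Finset.mem_sdiff.mpr ⟨hb1, hbk⟩) hbt
  obtain ⟨x, y, hxy⟩ := Submodule.mem_span_pair.mp hw
  have hwt : w ≠ t := fun h => hk3 (h ▸ hwB)
  have hy : y ≠ 0 := jp_y_ne hprop hwt hxy.symm
  apply hb2
  rw [jp_b_eq hy hxy.symm]
  exact Submodule.add_mem _ (Submodule.smul_mem _ _ (jp_mem_Sp hwB))
    (Submodule.smul_mem _ _ hftk)

lemma jp_modular {ℓ : ℕ} {c : ℕ → Finset (Fin n)}
    (hprop : ∀ i j : Fin n, i ≠ j → ∀ a : ℂ, f i ≠ a • f j)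
    (hs : SeriesOn f Finset.univ ℓ c)
    (hex : ∀ j, 1 ≤ j → j ≤ ℓ → finrank ℂ (jpSp f (c j)) = j) :
    ∀ j, 1 ≤ j → j ≤ ℓ → ∀ S : Finset (Fin n),
      ∃ T : Finset (Fin n), jpSp f (c j) ⊓ jpSp f S = jpSp f T := by
  classical
  have gen := jp_genericity hprop hs hex
  have key : ∀ d, d ≤ ℓ - 1 → ∀ S : Finset (Fin n),
      ∃ T, jpSp f (c (ℓ - d)) ⊓ jpSp f S = jpSp f T := by
    intro d
    induction d with
    | zero =>
      intro _ S
      refine ⟨S, ?_⟩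
      simp only [Nat.sub_zero]
      have hle : jpSp f S ≤ jpSp f (c ℓ) := by
        rw [hs.2.2.1]; exact jp_Sp_mono (Finset.subset_univ S)
      exact inf_eq_right.mpr hle
    | succ d ih =>
      intro hd S
      obtain ⟨T1, hT1⟩ := ih (by omega) S
      set j := ℓ - (d + 1) with hjdef
      have hj1 : 1 ≤ j := by omega
      have hjl : j ≤ ℓ := by omega
      have hjsucc : j + 1 = ℓ - d := by omega
      rw [← hjsucc] at hT1
      have hTsub : jpSp f T1 ≤ jpSp f (c (j + 1)) := by
        rw [← hT1]; exact inf_le_left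
      have hT1c : ∀ t ∈ T1, t ∈ c (j + 1) := fun t ht =>
        gen (j + 1) (by omega) (by omega) t (hTsub (jp_mem_Sp ht))
      set T := (c j).filter (fun t => f t ∈ jpSp f T1) with hTdef
      have hTc : ∀ t ∈ T, t ∈ c j ∧ f t ∈ jpSp f T1 := fun t ht => Finset.mem_filter.mp ht
      have hTmem : ∀ t, t ∈ c j → f t ∈ jpSp f T1 → t ∈ T := fun t h1 h2 =>
        Finset.mem_filter.mpr ⟨h1, h2⟩
      have hTle1 : jpSp f T ≤ jpSp f (c j) := jp_Sp_mono (Finset.filter_subset _ _)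
      have hTle2 : jpSp f T ≤ jpSp f T1 := jp_Sp_le (fun t ht => (hTc t ht).2)
      have hgoal_eq : jpSp f (c j) ⊓ jpSp f S = jpSp f (c j) ⊓ jpSp f T1 := by
        rw [← hT1, ← inf_assoc,
          inf_eq_left.mpr (jp_Sp_mono (jp_chain hs hj1 (Nat.le_succ j) (by omega)))]
      refine ⟨T, ?_⟩
      rw [hgoal_eq]
      by_cases hall : ∀ t ∈ T1, f t ∈ jpSp f (c j)
      · have h1 : jpSp f T1 ≤ jpSp f (c j) := jp_Sp_le hall
        have h2 : jpSp f T1 = jpSp f T := le_antisymm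
          (jp_Sp_le fun t ht => jp_mem_Sp
            (hTmem t (gen j hj1 hjl t (hall t ht)) (jp_mem_Sp ht))) hTle2
        rw [inf_eq_right.mpr h1, h2]
      · push_neg at hall
        obtain ⟨a, haT1, hfa⟩ := hall
        have hac : a ∈ c (j + 1) := hT1c a haT1
        have hacj : a ∉ c j := fun h => hfa (jp_mem_Sp h)
        have hstep := hs.2.2.2 j hj1 (by omega)
        have key2 : jpSp f T1 ≤ (ℂ ∙ f a) ⊔ jpSp f T := by
          apply jp_Sp_le
          intro b hbT1
          by_cases hfb : f b ∈ jpSp f (c j)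
          · exact Submodule.mem_sup_right (jp_mem_Sp (hTmem b (gen j hj1 hjl b hfb)
              (jp_mem_Sp hbT1)))
          by_cases hba : b = a
          · exact hba ▸ Submodule.mem_sup_left (Submodule.mem_span_singleton_self _)
          have hbc : b ∈ c (j + 1) := hT1c b hbT1
          have hbcj : b ∉ c j := fun h => hfb (jp_mem_Sp h)
          obtain ⟨w, hwB, hw⟩ := hstep.2.2.1 a (Finset.mem_sdiff.mpr ⟨hac, hacj⟩)
            b (Finset.mem_sdiff.mpr ⟨hbc, hbcj⟩) (fun h => hba h.symm)
          obtain ⟨x, y, hxy⟩ := Submodule.mem_span_pair.mp hw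
          have hwa : w ≠ a := fun h => hacj (h ▸ hwB)
          have hy : y ≠ 0 := jp_y_ne hprop hwa hxy.symm
          have hfw : f w ∈ jpSp f T1 := by
            rw [← hxy]
            exact Submodule.add_mem _ (Submodule.smul_mem _ _ (jp_mem_Sp haT1))
              (Submodule.smul_mem _ _ (jp_mem_Sp hbT1))
          have hwT : w ∈ T := hTmem w hwB hfw
          rw [jp_b_eq hy hxy.symm]
          exact Submodule.add_mem _
            (Submodule.mem_sup_right (Submodule.smul_mem _ _ (jp_mem_Sp hwT)))
            (Submodule.mem_sup_left (Submodule.smul_mem _ _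
              (Submodule.mem_span_singleton_self _)))
        apply le_antisymm
        · intro u hu
          obtain ⟨hu1, hu2⟩ := Submodule.mem_inf.mp hu
          obtain ⟨y1, hy1, z, hz, hyz⟩ := Submodule.mem_sup.mp (key2 hu2)
          obtain ⟨μ, hμ⟩ := Submodule.mem_span_singleton.mp hy1
          by_cases hμ0 : μ = 0
          · rw [← hyz, ← hμ, hμ0, zero_smul, zero_add]; exact hz
          · exfalso
            apply hfa
            have heq : μ • f a = u - z := by rw [← hyz, ← hμ]; abel
            have h5 : μ • f a ∈ jpSp f (c j) := by
              rw [heq]; exact Submodule.sub_mem _ hu1 (hTle1 hz)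
            have h6 := Submodule.smul_mem _ μ⁻¹ h5
            rwa [smul_smul, inv_mul_cancel₀ hμ0, one_smul] at h6
        · exact le_inf hTle1 hTle2
  intro j hj1 hjl S
  have hd : j = ℓ - (ℓ - j) := by omega
  rw [hd]
  exact key (ℓ - j) (by omega) S

end Backward

section AssembleAux

open Submodule Finset Module

variable {n : ℕ} {f : Fin n → Module.Dual ℂ V} [FiniteDimensional ℂ V]

lemma jp_corank_top : arrCorank (⊤ : Submodule ℂ V) = 0 := by
  unfold arrCorank
  haveI : Subsingleton (V ⧸ (⊤ : Submodule ℂ V)) :=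
    Submodule.Quotient.subsingleton_iff.mpr rfl
  exact Module.finrank_zero_of_subsingleton

lemma jp_coann_inj {U1 U2 : Submodule ℂ (Module.Dual ℂ V)}
    (h : U1.dualCoannihilator = U2.dualCoannihilator) : U1 = U2 := by
  have h2 := congrArg Submodule.dualAnnihilator h
  rwa [jp_coann_ann, jp_coann_ann] at h2

lemma jp_ker_of_mem_Sp {S : Finset (Fin n)} {t : Fin n} (ht : f t ∈ jpSp f S) :
    jpK f S ≤ LinearMap.ker (f t) := by
  rw [jp_K_eq_coann]
  intro v hv
  rw [LinearMap.mem_ker]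
  exact (Submodule.mem_dualCoannihilator v).mp hv (f t) ht

lemma jp_corank_anti {X Y : Submodule ℂ V} (h : X ≤ Y) : arrCorank Y ≤ arrCorank X := by
  unfold arrCorank
  have h1 := Submodule.finrank_quotient_add_finrank X
  have h2 := Submodule.finrank_quotient_add_finrank Y
  have h3 := Submodule.finrank_mono h
  omega

lemma jp_Sp_card (S : Finset (Fin n)) : finrank ℂ (jpSp f S) ≤ S.card := by
  classical
  have h : finrank ℂ (Submodule.span ℂ (f '' ↑S)) ≤ S.card := by
    rw [show (f '' ↑S) = ↑(S.image f) from Finset.coe_image.symm]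
    exact le_trans (finrank_span_finset_le_card (S.image f)) Finset.card_image_le
  exact h

lemma jp_Sp_pair {a b : Fin n} : jpSp f {a, b} = Submodule.span ℂ {f a, f b} := by
  show Submodule.span ℂ (f '' ↑({a, b} : Finset (Fin n))) = _
  rw [Finset.coe_insert, Finset.coe_singleton, Set.image_insert_eq, Set.image_singleton]

lemma jp_Sp_empty : jpSp f (∅ : Finset (Fin n)) = ⊥ := by
  show Submodule.span ℂ (f '' ↑(∅ : Finset (Fin n))) = ⊥
  simp

lemma jp_pair_rank (hf0 : ∀ i, f i ≠ 0)
    (hprop : ∀ i j : Fin n, i ≠ j → ∀ a : ℂ, f i ≠ a • f j)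
    {a b : Fin n} (hab : a ≠ b) : 2 ≤ finrank ℂ (jpSp f ({a, b} : Finset (Fin n))) := by
  by_contra h
  push_neg at h
  have hmem : a ∈ ({a, b} : Finset (Fin n)) := Finset.mem_insert_self a {b}
  have h1 : (ℂ ∙ f a) ≤ jpSp f ({a, b} : Finset (Fin n)) :=
    Submodule.span_le.mpr (Set.singleton_subset_iff.mpr (jp_mem_Sp hmem))
  have h2 : finrank ℂ ↥(ℂ ∙ f a) = 1 := finrank_span_singleton (hf0 a)
  have h3 := Submodule.eq_of_le_of_finrank_le h1 (by omega)
  have hmemb : b ∈ ({a, b} : Finset (Fin n)) :=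
    Finset.mem_insert_of_mem (Finset.mem_singleton_self b)
  have h4 : f b ∈ (ℂ ∙ f a) := by
    rw [h3]
    exact jp_mem_Sp hmemb
  obtain ⟨μ, hμ⟩ := Submodule.mem_span_singleton.mp h4
  exact hprop b a hab.symm μ hμ.symm

lemma jp_backward {ℓ : ℕ} {c : ℕ → Finset (Fin n)}
    (hprop : ∀ i j : Fin n, i ≠ j → ∀ a : ℂ, f i ≠ a • f j)
    (hc : IsCompSeries f ℓ c) (hlr : ℓ = arrRank f) : Supersolvable f := by
  classical
  have hs : SeriesOn f Finset.univ ℓ c := ⟨hc.1, hc.2.1, hc.2.2.1, hc.2.2.2⟩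
  have hrank : finrank ℂ (jpSp f (c ℓ)) = arrRank f := by
    rw [hs.2.2.1, jp_rank_eq]
  have hex := jp_ser_rank_exact hprop hs (le_of_eq (by rw [hrank, ← hlr]))
  have hmod := jp_modular hprop hs hex
  have hl1 := hc.1
  set Xf : ℕ → Submodule ℂ V := fun j => if j = 0 then ⊤ else jpK f (c j) with hXf
  have hXf0 : Xf 0 = ⊤ := by simp [hXf]
  have hXfi : ∀ i : ℕ, i ≠ 0 → Xf i = jpK f (c i) := fun i hi => by simp [hXf, hi]
  refine ⟨Xf, hXf0, ?_, ?_, ?_, ?_⟩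
  · have hr1 : arrRank f ≠ 0 := by omega
    rw [hXfi _ hr1, ← hlr, hs.2.2.1]
    show Finset.univ.inf (fun i => LinearMap.ker (f i)) = _
    rw [Finset.inf_eq_iInf]
    simp
  · intro i hir
    by_cases hi0 : i = 0
    · subst hi0
      rw [hXf0]
      exact ⟨⟨∅, Finset.empty_subset _, Finset.inf_empty.symm⟩,
        fun Y hY => by rw [top_sup_eq]; exact ⟨∅, Finset.empty_subset _, Finset.inf_empty.symm⟩⟩
    · rw [hXfi _ hi0]
      refine ⟨⟨c i, Finset.subset_univ _, rfl⟩, ?_⟩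
      rintro Y ⟨S, -, rfl⟩
      obtain ⟨T, hT⟩ := hmod i (by omega) (by omega) S
      refine ⟨T, Finset.subset_univ _, ?_⟩
      show jpK f (c i) ⊔ jpK f S = jpK f T
      rw [jp_K_sup_K, hT, jp_K_eq_coann]
  · intro i hir
    by_cases hi0 : i = 0
    · subst hi0; rw [hXf0]; exact jp_corank_top
    · rw [hXfi _ hi0, jp_corank_K (f := f) (c i)]
      exact hex i (by omega) (by omega)
  · intro i j hij hjr
    by_cases hj0 : j = 0
    · have : i = 0 := by omega
      subst hj0; subst this; exact le_rfl
    · rw [hXfi _ hj0]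
      by_cases hi0 : i = 0
      · rw [hi0, hXf0]; exact le_top
      · rw [hXfi _ hi0]
        have hsub := jp_chain hs (by omega : 1 ≤ i) hij (by omega)
        exact Finset.le_inf (fun b hb => Finset.inf_le (hsub hb))

end AssembleAux

section Forward

open Submodule Finset Module

variable {n : ℕ} {f : Fin n → Module.Dual ℂ V} [FiniteDimensional ℂ V]

lemma jp_forward {ℓ : ℕ} {c : ℕ → Finset (Fin n)}
    (hf0 : ∀ i, f i ≠ 0)
    (hprop : ∀ i j : Fin n, i ≠ j → ∀ a : ℂ, f i ≠ a • f j)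
    (hc : IsCompSeries f ℓ c) (hss : Supersolvable f) : ℓ = arrRank f := by
  classical
  obtain ⟨X, hX0, hXr, hmod, hcor, hanti⟩ := hss
  have hs : SeriesOn f Finset.univ ℓ c := ⟨hc.1, hc.2.1, hc.2.2.1, hc.2.2.2⟩
  obtain ⟨t0, ht0⟩ := Finset.card_eq_one.mp hs.2.1
  have hr1 : 1 ≤ arrRank f := by
    rw [jp_rank_eq]
    have h1 : (ℂ ∙ f t0) ≤ jpSp f (Finset.univ : Finset (Fin n)) :=
      Submodule.span_le.mpr (Set.singleton_subset_iff.mpr (jp_mem_Sp (Finset.mem_univ t0)))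
    have h2 : finrank ℂ ↥(ℂ ∙ f t0) = 1 := finrank_span_singleton (hf0 t0)
    have h3 := Submodule.finrank_mono h1
    omega
  set c' : ℕ → Finset (Fin n) :=
    fun i => Finset.univ.filter (fun t => X i ≤ LinearMap.ker (f t)) with hc'def
  have hmemc' : ∀ (i : ℕ) (t : Fin n), t ∈ c' i ↔ X i ≤ LinearMap.ker (f t) := by
    intro i t
    simp [hc'def]
  have hsat : ∀ i, i ≤ arrRank f → jpK f (c' i) = X i := by
    intro i hir
    obtain ⟨⟨S, hSsub, hSeq⟩, -⟩ := hmod i hir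
    apply le_antisymm
    · rw [hSeq]
      apply Finset.le_inf
      intro s hsS
      apply Finset.inf_le
      rw [hmemc', hSeq]
      exact Finset.inf_le hsS
    · apply Finset.le_inf
      intro t ht
      exact (hmemc' i t).mp ht
  have hW : ∀ i, i ≤ arrRank f → finrank ℂ (jpSp f (c' i)) = i := by
    intro i hir
    have h1 := jp_corank_K (f := f) (c' i)
    rw [hsat i hir] at h1
    rw [← h1]
    exact hcor i hir
  have hSpmem : ∀ i, i ≤ arrRank f → ∀ t, f t ∈ jpSp f (c' i) → t ∈ c' i := by
    intro i hir t ht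
    rw [hmemc', ← hsat i hir]
    exact jp_ker_of_mem_Sp ht
  have hne : ∀ i, i < arrRank f → c' i ≠ c' (i + 1) := by
    intro i hir heq
    have hXX : X i = X (i + 1) := by
      rw [← hsat i (by omega), heq, hsat (i + 1) (by omega)]
    have e1 := hcor i (by omega)
    have e2 := hcor (i + 1) (by omega)
    rw [← hXX] at e2
    omega
  have hsub : ∀ i j, i ≤ j → j ≤ arrRank f → c' i ⊆ c' j := by
    intro i j hij hjr t ht
    rw [hmemc']
    exact le_trans (hanti i j hij hjr) ((hmemc' i t).mp ht)
  have hsteps : ∀ i, 1 ≤ i → i < arrRank f → IsSolvableExtension f (c' i) (c' (i + 1)) := by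
    intro i hi1 hir
    have hUeq : ∀ S : Finset (Fin n), ∃ T : Finset (Fin n),
        jpSp f (c' i) ⊓ jpSp f S = jpSp f T := by
      intro S
      have hY : (jpK f S) ∈ arrLattice f := ⟨S, Finset.subset_univ _, rfl⟩
      obtain ⟨T', hT'sub, hT'eq⟩ := (hmod i (by omega)).2 _ hY
      refine ⟨T', jp_coann_inj ?_⟩
      rw [← jp_K_sup_K, ← jp_K_eq_coann (f := f) T', hsat i (by omega)]
      exact hT'eq
    refine ⟨?_, ?_, ?_, ?_⟩
    · exact Finset.ssubset_iff_subset_ne.mpr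
        ⟨hsub i (i + 1) (by omega) (by omega), hne i hir⟩
    · -- closure
      intro α hα β hβ hab a ha
      rw [Finset.mem_sdiff] at ha
      apply jp_indep3_of_pair_not_mem (jp_pair_indep (hf0 β) (hprop α β hab))
      intro hmem
      apply ha.2
      apply hSpmem i (by omega)
      have hsp : Submodule.span ℂ {f α, f β} ≤ jpSp f (c' i) := by
        apply Submodule.span_le.mpr
        intro x hx
        rcases Set.mem_insert_iff.mp hx with rfl | hx1
        · exact jp_mem_Sp hα
        · rw [Set.mem_singleton_iff.mp hx1]
          exact jp_mem_Sp hβ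
      exact hsp hmem
    · -- completion
      intro a ha b hb hab
      rw [Finset.mem_sdiff] at ha hb
      obtain ⟨T', hU⟩ := hUeq {a, b}
      have hsup : jpSp f (c' i) ⊔ jpSp f ({a, b} : Finset (Fin n)) ≤ jpSp f (c' (i + 1)) := by
        apply sup_le (jp_Sp_mono (hsub i (i + 1) (by omega) (by omega)))
        apply jp_Sp_le
        intro t ht
        rcases Finset.mem_insert.mp ht with rfl | ht1
        · exact jp_mem_Sp ha.1
        · rw [Finset.mem_singleton.mp ht1]
          exact jp_mem_Sp hb.1
      have h2ab : 2 ≤ finrank ℂ (jpSp f ({a, b} : Finset (Fin n))) := jp_pair_rank hf0 hprop hab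
      have hdim := Submodule.finrank_sup_add_finrank_inf_eq (jpSp f (c' i))
        (jpSp f ({a, b} : Finset (Fin n)))
      have hsupfr : finrank ℂ ↥(jpSp f (c' i) ⊔ jpSp f ({a, b} : Finset (Fin n)))
          ≤ i + 1 := by
        have h5 := Submodule.finrank_mono hsup
        rw [hW (i + 1) (by omega)] at h5
        exact h5
      have hWi := hW i (by omega)
      have hUfr : 1 ≤ finrank ℂ ↥(jpSp f (c' i) ⊓ jpSp f ({a, b} : Finset (Fin n))) := by
        omega
      have hT'ne : ∃ t, t ∈ T' := by
        by_contra hempty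
        push_neg at hempty
        have hTe : T' = ∅ := Finset.eq_empty_iff_forall_notMem.mpr hempty
        rw [hU, hTe, jp_Sp_empty] at hUfr
        simp at hUfr
      obtain ⟨t, htT'⟩ := hT'ne
      have hft : f t ∈ jpSp f (c' i) ⊓ jpSp f ({a, b} : Finset (Fin n)) := by
        rw [hU]
        exact jp_mem_Sp htT'
      refine ⟨t, hSpmem i (by omega) t hft.1, ?_⟩
      rw [← jp_Sp_pair]
      exact hft.2
    · -- solvability
      intro a ha b hb cc hcc hab hbc hac α hα β hβ γ hγ m1 m2 m3
      right
      rw [Finset.mem_sdiff] at ha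
      have habc : ∀ x y : Fin n, x ∈ ({a, b, cc} : Finset (Fin n)) →
          y ∈ ({a, b, cc} : Finset (Fin n)) →
          Submodule.span ℂ {f x, f y} ≤ jpSp f ({a, b, cc} : Finset (Fin n)) := by
        intro x y hx hy
        apply Submodule.span_le.mpr
        intro u hu
        rcases Set.mem_insert_iff.mp hu with rfl | hu1
        · exact jp_mem_Sp hx
        · rw [Set.mem_singleton_iff.mp hu1]
          exact jp_mem_Sp hy
      have hamem : a ∈ ({a, b, cc} : Finset (Fin n)) := by simp
      have hbmem : b ∈ ({a, b, cc} : Finset (Fin n)) := by simp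
      have hcmem : cc ∈ ({a, b, cc} : Finset (Fin n)) := by simp
      have hle : Submodule.span ℂ {f α, f β, f γ} ≤
          jpSp f (c' i) ⊓ jpSp f ({a, b, cc} : Finset (Fin n)) := by
        apply Submodule.span_le.mpr
        intro x hx
        rcases Set.mem_insert_iff.mp hx with rfl | hx1
        · exact ⟨jp_mem_Sp hα, habc a b hamem hbmem m1⟩
        rcases Set.mem_insert_iff.mp hx1 with rfl | hx2
        · exact ⟨jp_mem_Sp hβ, habc b cc hbmem hcmem m2⟩
        · rw [Set.mem_singleton_iff.mp hx2]
          exact ⟨jp_mem_Sp hγ, habc a cc hamem hcmem m3⟩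
      have hPlt : jpSp f (c' i) ⊓ jpSp f ({a, b, cc} : Finset (Fin n)) <
          jpSp f ({a, b, cc} : Finset (Fin n)) := by
        apply lt_of_le_of_ne inf_le_right
        intro hPeq
        apply ha.2
        apply hSpmem i (by omega)
        have h6 : f a ∈ jpSp f ({a, b, cc} : Finset (Fin n)) := jp_mem_Sp hamem
        rw [← hPeq] at h6
        exact h6.1
      have h3 : finrank ℂ (jpSp f ({a, b, cc} : Finset (Fin n))) ≤ 3 := by
        refine le_trans (jp_Sp_card _) ?_
        refine le_trans (Finset.card_insert_le _ _) ?_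
        have := Finset.card_insert_le b ({cc} : Finset (Fin n))
        simp only [Finset.card_singleton] at this
        omega
      have h4 := Submodule.finrank_lt_finrank_of_lt hPlt
      have h5 := Submodule.finrank_mono hle
      omega
  have hcard1 : (c' 1).card = 1 := by
    have hne1 : (c' 1).Nonempty := by
      by_contra h
      rw [Finset.not_nonempty_iff_eq_empty] at h
      have h1 := hsat 1 hr1
      rw [h] at h1
      have hK : jpK f (∅ : Finset (Fin n)) = ⊤ := Finset.inf_empty
      rw [hK] at h1
      have h2 := hcor 1 hr1
      rw [← h1] at h2
      rw [jp_corank_top] at h2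
      omega
    obtain ⟨t1, ht1⟩ := hne1
    rw [Finset.card_eq_one]
    refine ⟨t1, Finset.eq_singleton_iff_unique_mem.mpr ⟨ht1, ?_⟩⟩
    intro t ht
    by_contra hne'
    have h1 : X 1 ≤ jpK f ({t, t1} : Finset (Fin n)) := by
      apply Finset.le_inf
      intro s hsmem
      rcases Finset.mem_insert.mp hsmem with rfl | hs1
      · exact (hmemc' 1 s).mp ht
      · rw [Finset.mem_singleton.mp hs1]
        exact (hmemc' 1 t1).mp ht1
    have h2 := jp_corank_anti h1
    rw [jp_corank_K (f := f), hcor 1 hr1] at h2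
    have h3 := jp_pair_rank hf0 hprop hne'
    omega
  have hs' : SeriesOn f Finset.univ (arrRank f) c' := by
    refine ⟨hr1, hcard1, ?_, hsteps⟩
    apply Finset.eq_univ_of_forall
    intro t
    rw [hmemc', hXr]
    exact iInf_le _ t
  exact (jp_main (Finset.univ : Finset (Fin n)).card Finset.univ le_rfl).1 hs hs'

end Forward


/-- Jambu–Papadima, Theorem D. A hypersolvable central arrangement with a
composition series of length `ℓ` is supersolvable if and only if `ℓ = r(A)`. -/
theorem supersolvable_iff_length_eq_rank (l n ℓ : ℕ)
    (f : Fin n → Module.Dual ℂ (Fin l → ℂ))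
    (hf0 : ∀ i, f i ≠ 0)
    (hprop : ∀ i j : Fin n, i ≠ j → ∀ a : ℂ, f i ≠ a • f j)
    (c : ℕ → Finset (Fin n)) (hc : IsCompSeries f ℓ c) :
    Supersolvable f ↔ ℓ = arrRank f := by
  constructor
  · intro h
    exact jp_forward hf0 hprop hc h
  · intro h
    exact jp_backward hprop hc h
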